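/- Existence and uniqueness of the adjusted level: for every integer n ≥ 1, all r, s > 0, every α ∈ (0,1), and every α_U ∈ (α, 1) such that C(α_U, n, r, s) ≤ 1 − α, there exists a unique α' ∈ [α, α_U] with C(α', n, r, s) = 1 − α. -/

import Mathlib

open MeasureTheory

/-- The Beta function `β(r,s) = ∫₀¹ t^(r-1) (1-t)^(s-1) dt`. -/
noncomputable def betaFun (r s : ℝ) : ℝ :=
  ∫ t in (0:ℝ)..1, t ^ (r - 1) * (1 - t) ^ (s - 1)

/-- The Beta(r,s) density `f(t;r,s) = t^(r-1)(1-t)^(s-1)/β(r,s)`. -/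
noncomputable def betaPDF (r s t : ℝ) : ℝ :=
  t ^ (r - 1) * (1 - t) ^ (s - 1) / betaFun r s

/-- The Beta(r,s) cumulative distribution function `∫₀ᵖ f(t;r,s) dt`. -/
noncomputable def betaCDF (r s p : ℝ) : ℝ :=
  ∫ t in (0:ℝ)..p, betaPDF r s t

/- The Beta quantile `B(q;r,s)`: the (unique, for `r,s>0`, `q∈(0,1)`) `t ∈ (0,1)`
with `∫₀ᵗ f(u;r,s) du = q`. -/
open Classical in
noncomputable def betaQuantile (r s q : ℝ) : ℝ :=
  if h : ∃ t, t ∈ Set.Ioo (0:ℝ) 1 ∧ betaCDF r s t = q then h.choose else 0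

/-- Lower Clopper–Pearson endpoint: `p_L(X,α) = B(α/2; X, n-X+1)` for `X ≥ 1`,
and `p_L(0,α) = 0`. -/
noncomputable def cpLower (n X : ℕ) (α : ℝ) : ℝ :=
  if X = 0 then 0 else betaQuantile (X : ℝ) ((n : ℝ) - X + 1) (α / 2)

/-- Upper Clopper–Pearson endpoint: `p_U(X,α) = B(1-α/2; X+1, n-X)` for `X ≤ n-1`,
and `p_U(n,α) = 1`. -/
noncomputable def cpUpper (n X : ℕ) (α : ℝ) : ℝ :=
  if X = n then 1 else betaQuantile ((X : ℝ) + 1) ((n : ℝ) - X) (1 - α / 2)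

/-- The binomial probability `b(X;n,p) = C(n,X) p^X (1-p)^(n-X)`. -/
noncomputable def binomPMF (n X : ℕ) (p : ℝ) : ℝ :=
  (n.choose X : ℝ) * p ^ X * (1 - p) ^ (n - X)

open Classical in
/-- The mean coverage `C(α,n,r,s)` of the level-(1-α) Clopper–Pearson interval with respect
to the Beta(r,s) density. -/
noncomputable def meanCoverage (α : ℝ) (n : ℕ) (r s : ℝ) : ℝ :=
  ∫ p in (0:ℝ)..1,
    (∑ X ∈ Finset.range (n + 1),
      (if cpLower n X α ≤ p ∧ p ≤ cpUpper n X α then binomPMF n X p else 0)) * betaPDF r s p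

lemma betaKer_intervalIntegrable {r s : ℝ} (hr : 0 < r) (hs : 0 < s) :
    IntervalIntegrable (fun t : ℝ => t ^ (r - 1) * (1 - t) ^ (s - 1)) volume 0 1 := by
  have h := Complex.betaIntegral_convergent (u := (r : ℂ)) (v := (s : ℂ)) (by simpa) (by simpa)
  rw [intervalIntegrable_iff_integrableOn_Ioc_of_le (by norm_num)] at h ⊢
  have : ∀ᵐ t ∂(volume.restrict (Set.Ioc (0:ℝ) 1)),
      ((t ^ (r - 1) * (1 - t) ^ (s - 1) : ℝ) : ℂ)
        = (t : ℂ) ^ ((r:ℂ) - 1) * (1 - (t:ℂ)) ^ ((s:ℂ) - 1) := by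
    filter_upwards [ae_restrict_mem measurableSet_Ioc] with t ht
    have h0 : (0:ℝ) ≤ t := le_of_lt ht.1
    have h1 : (0:ℝ) ≤ 1 - t := by linarith [ht.2]
    push_cast [Complex.ofReal_cpow h0, Complex.ofReal_cpow h1]
    ring
  have h2 : IntegrableOn (fun t : ℝ => ((t ^ (r - 1) * (1 - t) ^ (s - 1) : ℝ) : ℂ))
      (Set.Ioc (0:ℝ) 1) volume := (Integrable.congr h (Filter.EventuallyEq.symm this))
  simpa [IntegrableOn] using h2.re
lemma betaKer_pos {r s t : ℝ} (ht : t ∈ Set.Ioo (0:ℝ) 1) :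
    0 < t ^ (r - 1) * (1 - t) ^ (s - 1) :=
  mul_pos (Real.rpow_pos_of_pos ht.1 _) (Real.rpow_pos_of_pos (by linarith [ht.2]) _)
lemma betaFun_pos {r s : ℝ} (hr : 0 < r) (hs : 0 < s) : 0 < betaFun r s :=
  intervalIntegral.intervalIntegral_pos_of_pos_on (betaKer_intervalIntegrable hr hs)
    (fun _ hx => betaKer_pos hx) one_pos
lemma betaPDF_pos {r s t : ℝ} (hr : 0 < r) (hs : 0 < s) (ht : t ∈ Set.Ioo (0:ℝ) 1) :
    0 < betaPDF r s t :=
  div_pos (betaKer_pos ht) (betaFun_pos hr hs)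
lemma betaPDF_intervalIntegrable {r s : ℝ} (hr : 0 < r) (hs : 0 < s) {a b : ℝ}
    (ha : a ∈ Set.Icc (0:ℝ) 1) (hb : b ∈ Set.Icc (0:ℝ) 1) :
    IntervalIntegrable (betaPDF r s) volume a b := by
  have h := (betaKer_intervalIntegrable hr hs).div_const (betaFun r s)
  have hsub : Set.uIcc a b ⊆ Set.uIcc (0:ℝ) 1 := by
    rw [Set.uIcc_of_le (by norm_num : (0:ℝ) ≤ 1)]
    exact Set.uIcc_subset_Icc ha hb
  exact (h.mono_set hsub)
lemma betaCDF_zero (r s : ℝ) : betaCDF r s 0 = 0 := by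
  simp [betaCDF]
lemma betaCDF_one {r s : ℝ} (hr : 0 < r) (hs : 0 < s) : betaCDF r s 1 = 1 := by
  have hc := (betaFun_pos hr hs).ne'
  simp only [betaCDF, betaPDF]
  rw [intervalIntegral.integral_div]
  exact div_self (by simpa [betaFun] using hc)
lemma betaCDF_sub {r s : ℝ} (hr : 0 < r) (hs : 0 < s) {a b : ℝ}
    (ha : a ∈ Set.Icc (0:ℝ) 1) (hb : b ∈ Set.Icc (0:ℝ) 1) :
    betaCDF r s b - betaCDF r s a = ∫ t in a..b, betaPDF r s t := by
  have h1 : IntervalIntegrable (betaPDF r s) volume 0 a :=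
    betaPDF_intervalIntegrable hr hs (by norm_num) ha
  have h2 : IntervalIntegrable (betaPDF r s) volume a b :=
    betaPDF_intervalIntegrable hr hs ha hb
  have := intervalIntegral.integral_add_adjacent_intervals h1 h2
  simp only [betaCDF]
  linarith [this]
lemma betaCDF_strictMonoOn {r s : ℝ} (hr : 0 < r) (hs : 0 < s) :
    StrictMonoOn (betaCDF r s) (Set.Icc (0:ℝ) 1) := by
  intro a ha b hb hab
  have key : 0 < ∫ t in a..b, betaPDF r s t := by
    refine intervalIntegral.intervalIntegral_pos_of_pos_on
      (betaPDF_intervalIntegrable hr hs ha hb) (fun x hx => ?_) hab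
    exact betaPDF_pos hr hs ⟨lt_of_le_of_lt ha.1 hx.1, lt_of_lt_of_le hx.2 hb.2⟩
  have := betaCDF_sub hr hs ha hb
  linarith
lemma betaCDF_continuousOn {r s : ℝ} (hr : 0 < r) (hs : 0 < s) :
    ContinuousOn (betaCDF r s) (Set.Icc (0:ℝ) 1) := by
  have h := intervalIntegral.continuousOn_primitive_interval'
    (betaPDF_intervalIntegrable hr hs (by norm_num) (by norm_num) : IntervalIntegrable (betaPDF r s) volume 0 1)
    (a := 0) (by simp)
  exact (by simpa [Set.uIcc_of_le (by norm_num : (0:ℝ) ≤ 1)] using h :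
    ContinuousOn (fun b => ∫ x in (0:ℝ)..b, betaPDF r s x) (Set.Icc 0 1))
lemma betaQuantile_spec {r s : ℝ} (hr : 0 < r) (hs : 0 < s) {q : ℝ}
    (hq : q ∈ Set.Ioo (0:ℝ) 1) :
    betaQuantile r s q ∈ Set.Ioo (0:ℝ) 1 ∧ betaCDF r s (betaQuantile r s q) = q := by
  have hex : ∃ t, t ∈ Set.Ioo (0:ℝ) 1 ∧ betaCDF r s t = q := by
    have h := intermediate_value_Icc (by norm_num : (0:ℝ) ≤ 1) (betaCDF_continuousOn hr hs)
    rw [betaCDF_zero, betaCDF_one hr hs] at h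
    obtain ⟨t, ht, hFt⟩ := h ⟨hq.1.le, hq.2.le⟩
    refine ⟨t, ⟨?_, ?_⟩, hFt⟩
    · rcases eq_or_lt_of_le ht.1 with h0 | h0
      · exfalso; rw [← h0, betaCDF_zero] at hFt; exact hq.1.ne hFt
      · exact h0
    · rcases eq_or_lt_of_le ht.2 with h1 | h1
      · exfalso; rw [h1, betaCDF_one hr hs] at hFt; exact hq.2.ne' hFt
      · exact h1
  rw [betaQuantile, dif_pos hex]
  exact hex.choose_spec
lemma betaQuantile_mem {r s : ℝ} (hr : 0 < r) (hs : 0 < s) {q : ℝ}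
    (hq : q ∈ Set.Ioo (0:ℝ) 1) : betaQuantile r s q ∈ Set.Ioo (0:ℝ) 1 :=
  (betaQuantile_spec hr hs hq).1
lemma betaCDF_betaQuantile {r s : ℝ} (hr : 0 < r) (hs : 0 < s) {q : ℝ}
    (hq : q ∈ Set.Ioo (0:ℝ) 1) : betaCDF r s (betaQuantile r s q) = q :=
  (betaQuantile_spec hr hs hq).2
lemma lt_betaQuantile_iff {r s : ℝ} (hr : 0 < r) (hs : 0 < s) {q p : ℝ}
    (hq : q ∈ Set.Ioo (0:ℝ) 1) (hp : p ∈ Set.Icc (0:ℝ) 1) :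
    p < betaQuantile r s q ↔ betaCDF r s p < q := by
  have hQ := betaQuantile_mem hr hs hq
  conv_rhs => rw [← betaCDF_betaQuantile hr hs hq]
  exact ((betaCDF_strictMonoOn hr hs).lt_iff_lt hp (Set.mem_Icc_of_Ioo hQ)).symm
lemma betaQuantile_le_iff {r s : ℝ} (hr : 0 < r) (hs : 0 < s) {q p : ℝ}
    (hq : q ∈ Set.Ioo (0:ℝ) 1) (hp : p ∈ Set.Icc (0:ℝ) 1) :
    betaQuantile r s q ≤ p ↔ q ≤ betaCDF r s p := by
  rw [← not_lt, ← not_lt, lt_betaQuantile_iff hr hs hq hp]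
lemma betaQuantile_strictMonoOn {r s : ℝ} (hr : 0 < r) (hs : 0 < s) :
    StrictMonoOn (betaQuantile r s) (Set.Ioo (0:ℝ) 1) := by
  intro a ha b hb hab
  have hQa := betaQuantile_mem hr hs ha
  have hQb := betaQuantile_mem hr hs hb
  rw [← (betaCDF_strictMonoOn hr hs).lt_iff_lt (Set.mem_Icc_of_Ioo hQa) (Set.mem_Icc_of_Ioo hQb),
    betaCDF_betaQuantile hr hs ha, betaCDF_betaQuantile hr hs hb] at *
  exact hab
lemma betaQuantile_betaCDF {r s : ℝ} (hr : 0 < r) (hs : 0 < s) {t : ℝ}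
    (ht : t ∈ Set.Ioo (0:ℝ) 1) : betaQuantile r s (betaCDF r s t) = t := by
  have hFt : betaCDF r s t ∈ Set.Ioo (0:ℝ) 1 := by
    constructor
    · rw [← betaCDF_zero r s]
      exact betaCDF_strictMonoOn hr hs (by norm_num) (Set.mem_Icc_of_Ioo ht) ht.1
    · rw [← betaCDF_one hr hs]
      exact betaCDF_strictMonoOn hr hs (Set.mem_Icc_of_Ioo ht) (by norm_num) ht.2
  have hQ := betaQuantile_mem hr hs hFt
  have hF := betaCDF_betaQuantile hr hs hFt
  exact (betaCDF_strictMonoOn hr hs).injOn (Set.mem_Icc_of_Ioo hQ) (Set.mem_Icc_of_Ioo ht) hF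
lemma betaQuantile_continuousOn {r s : ℝ} (hr : 0 < r) (hs : 0 < s) :
    ContinuousOn (betaQuantile r s) (Set.Ioo (0:ℝ) 1) := by
  have himg : betaQuantile r s '' Set.Ioo (0:ℝ) 1 = Set.Ioo (0:ℝ) 1 := by
    apply Set.Subset.antisymm
    · rintro _ ⟨q, hq, rfl⟩; exact betaQuantile_mem hr hs hq
    · intro t ht
      refine ⟨betaCDF r s t, ?_, betaQuantile_betaCDF hr hs ht⟩
      constructor
      · rw [← betaCDF_zero r s]
        exact betaCDF_strictMonoOn hr hs (by norm_num) (Set.mem_Icc_of_Ioo ht) ht.1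
      · rw [← betaCDF_one hr hs]
        exact betaCDF_strictMonoOn hr hs (Set.mem_Icc_of_Ioo ht) (by norm_num) ht.2
  intro q hq
  refine ContinuousAt.continuousWithinAt ?_
  refine (betaQuantile_strictMonoOn hr hs).continuousAt_of_image_mem_nhds
    ((isOpen_Ioo).mem_nhds hq) ?_
  rw [himg]
  exact (isOpen_Ioo).mem_nhds (betaQuantile_mem hr hs hq)
lemma binomPMF_nonneg {n X : ℕ} {p : ℝ} (hp : p ∈ Set.Icc (0:ℝ) 1) : 0 ≤ binomPMF n X p :=
  mul_nonneg (mul_nonneg (by positivity) (pow_nonneg hp.1 _))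
    (pow_nonneg (by linarith [hp.2]) _)
lemma sum_binomPMF (n : ℕ) (p : ℝ) : ∑ X ∈ Finset.range (n+1), binomPMF n X p = 1 := by
  have h := add_pow p (1-p) n
  have : p + (1 - p) = 1 := by ring
  rw [this, one_pow] at h
  rw [h]
  exact Finset.sum_congr rfl (fun k _ => by unfold binomPMF; ring)
lemma hasDerivAt_binomTail {n X : ℕ} (hX1 : 1 ≤ X) (hXn : X ≤ n) (p : ℝ) :
    HasDerivAt (fun q => ∑ k ∈ Finset.Icc X n, binomPMF n k q)
      ((X:ℝ) * (n.choose X) * p^(X-1) * (1-p)^(n-X)) p := by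
  set ψ : ℕ → ℝ := fun k => (k:ℝ) * (n.choose k) * p^(k-1) * (1-p)^(n-k) with hψ
  have key : ∀ k ∈ Finset.Icc X n, HasDerivAt (fun q => binomPMF n k q) (ψ k - ψ (k+1)) p := by
    intro k hk
    rw [Finset.mem_Icc] at hk
    have h1 : HasDerivAt (fun q : ℝ => q ^ k) ((k:ℝ) * p ^ (k-1)) p := hasDerivAt_pow k p
    have h2 : HasDerivAt (fun q : ℝ => (1 - q) ^ (n - k))
        (((n-k : ℕ):ℝ) * (1-p) ^ (n-k-1) * (-1)) p :=
      HasDerivAt.fun_pow ((hasDerivAt_id p).const_sub 1) (n-k)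
    have h3 := ((h1.fun_mul h2).const_mul ((n.choose k : ℝ)))
    have heq : (fun q : ℝ => (n.choose k : ℝ) * (q ^ k * (1 - q) ^ (n - k)))
        = fun q => binomPMF n k q := by
      funext q; unfold binomPMF; ring
    rw [heq] at h3
    refine HasDerivAt.congr_deriv h3 ?_
    have h4 : n.choose (k+1) * (k+1) = n.choose k * (n - k) := Nat.choose_succ_right_eq n k
    have h5 : (k+1) * n.choose (k+1) = (n-k) * n.choose k := by
      rw [mul_comm, mul_comm (n-k)]; exact h4
    have hrec : ((k+1 : ℕ):ℝ) * (n.choose (k+1) : ℝ) = ((n - k : ℕ):ℝ) * (n.choose k : ℝ) := by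
      exact_mod_cast h5
    have hsub : n - (k+1) = n - k - 1 := by omega
    simp only [hψ, hsub, Nat.add_sub_cancel]
    rw [hrec]
    ring
  have hsum := HasDerivAt.fun_sum key
  refine HasDerivAt.congr_deriv hsum ?_
  rw [← Finset.Ico_add_one_right_eq_Icc, Finset.sum_Ico_eq_sub _ (by omega : X ≤ n + 1),
    Finset.sum_range_sub' ψ, Finset.sum_range_sub' ψ]
  have hψtop : ψ (n+1) = 0 := by simp [hψ, Nat.choose_succ_self]
  have hψX : ψ X = (X:ℝ) * (n.choose X) * p^(X-1) * (1-p)^(n-X) := rfl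
  rw [hψtop, hψX]
  ring
lemma binomTail_apply_zero {n X : ℕ} (hX1 : 1 ≤ X) :
    ∑ k ∈ Finset.Icc X n, binomPMF n k 0 = 0 := by
  apply Finset.sum_eq_zero
  intro k hk
  rw [Finset.mem_Icc] at hk
  unfold binomPMF
  rw [zero_pow (by omega : k ≠ 0)]
  ring
lemma binomTail_apply_one {n X : ℕ} (hXn : X ≤ n) :
    ∑ k ∈ Finset.Icc X n, binomPMF n k 1 = 1 := by
  rw [Finset.sum_eq_single n]
  · unfold binomPMF; simp
  · intro k hk hkn
    rw [Finset.mem_Icc] at hk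
    unfold binomPMF
    rw [sub_self, zero_pow (by omega : n - k ≠ 0)]
    ring
  · intro h
    exact absurd (Finset.mem_Icc.mpr ⟨hXn, le_refl n⟩) h
lemma betaCDF_eq_binomTail {n X : ℕ} (hX1 : 1 ≤ X) (hXn : X ≤ n) (p : ℝ) :
    betaCDF (X:ℝ) ((n:ℝ) - X + 1) p = ∑ k ∈ Finset.Icc X n, binomPMF n k p := by
  set c : ℝ := (X:ℝ) * (n.choose X) with hcdef
  have hc : (0:ℝ) < c := by
    apply mul_pos (by exact_mod_cast hX1)
    exact_mod_cast Nat.choose_pos hXn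
  set φ : ℝ → ℝ := fun q => ∑ k ∈ Finset.Icc X n, binomPMF n k q with hφ
  have hker : ∀ t : ℝ, t ^ ((X:ℝ) - 1) * (1 - t) ^ ((n:ℝ) - (X:ℝ) + 1 - 1)
      = t ^ (X-1) * (1-t) ^ (n-X) := by
    intro t
    have e1 : (X:ℝ) - 1 = ((X - 1 : ℕ) : ℝ) := by rw [Nat.cast_sub hX1]; norm_num
    have e2 : (n:ℝ) - (X:ℝ) + 1 - 1 = ((n - X : ℕ) : ℝ) := by rw [Nat.cast_sub hXn]; ring
    rw [e1, e2, Real.rpow_natCast, Real.rpow_natCast]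
  have hcont : Continuous (fun t : ℝ => t ^ (X-1) * (1-t) ^ (n-X)) := by continuity
  have hFTC : ∀ q : ℝ, ∫ t in (0:ℝ)..q, c * (t ^ (X-1) * (1-t) ^ (n-X)) = φ q := by
    intro q
    have hd : ∀ t ∈ Set.uIcc (0:ℝ) q, HasDerivAt φ (c * (t ^ (X-1) * (1-t) ^ (n-X))) t := by
      intro t _
      have := hasDerivAt_binomTail hX1 hXn t
      convert this using 1
      rw [hcdef]; ring
    have hint : IntervalIntegrable (fun t => c * (t ^ (X-1) * (1-t) ^ (n-X))) volume 0 q :=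
      (continuous_const.mul hcont).intervalIntegrable 0 q
    rw [intervalIntegral.integral_eq_sub_of_hasDerivAt hd hint]
    rw [hφ]
    simp [binomTail_apply_zero hX1]
  have hint2 : ∀ q : ℝ, ∫ t in (0:ℝ)..q, t ^ (X-1) * (1-t) ^ (n-X) = φ q / c := by
    intro q
    have := hFTC q
    rw [intervalIntegral.integral_const_mul] at this
    field_simp
    linarith [this]
  have hbeta : betaFun (X:ℝ) ((n:ℝ) - (X:ℝ) + 1) = 1 / c := by
    rw [betaFun]
    rw [intervalIntegral.integral_congr (g := fun t => t ^ (X-1) * (1-t) ^ (n-X))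
      (fun t _ => hker t)]
    rw [hint2 1]
    show (∑ k ∈ Finset.Icc X n, binomPMF n k 1) / c = 1 / c
    rw [binomTail_apply_one hXn]
  rw [betaCDF]
  have : ∀ t : ℝ, betaPDF (X:ℝ) ((n:ℝ) - (X:ℝ) + 1) t
      = (t ^ (X-1) * (1-t) ^ (n-X)) * c := by
    intro t
    rw [betaPDF, hker t, hbeta]
    field_simp
  rw [intervalIntegral.integral_congr (fun t _ => this t),
    intervalIntegral.integral_mul_const, hint2 p]
  field_simp
  rfl
lemma betaQuantile_lt_iff {r s : ℝ} (hr : 0 < r) (hs : 0 < s) {q p : ℝ}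
    (hq : q ∈ Set.Ioo (0:ℝ) 1) (hp : p ∈ Set.Icc (0:ℝ) 1) :
    betaQuantile r s q < p ↔ q < betaCDF r s p := by
  have hQ := betaQuantile_mem hr hs hq
  conv_rhs => rw [← betaCDF_betaQuantile hr hs hq]
  exact ((betaCDF_strictMonoOn hr hs).lt_iff_lt (Set.mem_Icc_of_Ioo hQ) hp).symm
lemma half_mem {α : ℝ} (hα : α ∈ Set.Ioo (0:ℝ) 1) : α / 2 ∈ Set.Ioo (0:ℝ) 1 :=
  ⟨by linarith [hα.1], by linarith [hα.2]⟩
lemma one_sub_half_mem {α : ℝ} (hα : α ∈ Set.Ioo (0:ℝ) 1) : 1 - α / 2 ∈ Set.Ioo (0:ℝ) 1 :=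
  ⟨by linarith [hα.2], by linarith [hα.1]⟩
lemma cpLower_pos_params {n X : ℕ} (hX : X ≠ 0) (hXn : X ≤ n) :
    (0:ℝ) < (X:ℝ) ∧ (0:ℝ) < (n:ℝ) - X + 1 := by
  constructor
  · exact_mod_cast Nat.pos_of_ne_zero hX
  · have : (X:ℝ) ≤ (n:ℝ) := by exact_mod_cast hXn
    linarith
lemma cpUpper_pos_params {n X : ℕ} (hX : X ≠ n) (hXn : X ≤ n) :
    (0:ℝ) < (X:ℝ) + 1 ∧ (0:ℝ) < (n:ℝ) - X := by
  constructor
  · positivity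
  · have : (X:ℝ) + 1 ≤ (n:ℝ) := by exact_mod_cast by omega
    linarith
lemma cpLower_mem {n X : ℕ} (hXn : X ≤ n) {α : ℝ} (hα : α ∈ Set.Ioo (0:ℝ) 1) :
    cpLower n X α ∈ Set.Icc (0:ℝ) 1 := by
  unfold cpLower
  split_ifs with h
  · norm_num
  · obtain ⟨h1, h2⟩ := cpLower_pos_params h hXn
    exact Set.mem_Icc_of_Ioo (betaQuantile_mem h1 h2 (half_mem hα))
lemma cpUpper_mem {n X : ℕ} (hXn : X ≤ n) {α : ℝ} (hα : α ∈ Set.Ioo (0:ℝ) 1) :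
    cpUpper n X α ∈ Set.Icc (0:ℝ) 1 := by
  unfold cpUpper
  split_ifs with h
  · norm_num
  · obtain ⟨h1, h2⟩ := cpUpper_pos_params h hXn
    exact Set.mem_Icc_of_Ioo (betaQuantile_mem h1 h2 (one_sub_half_mem hα))
lemma cpLower_mono {n X : ℕ} (hXn : X ≤ n) {α₁ α₂ : ℝ} (hα₁ : α₁ ∈ Set.Ioo (0:ℝ) 1)
    (hα₂ : α₂ ∈ Set.Ioo (0:ℝ) 1) (h : α₁ ≤ α₂) : cpLower n X α₁ ≤ cpLower n X α₂ := by
  unfold cpLower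
  split_ifs with hX
  · exact le_refl 0
  · obtain ⟨h1, h2⟩ := cpLower_pos_params hX hXn
    rcases eq_or_lt_of_le h with rfl | hlt
    · exact le_refl _
    · exact le_of_lt (betaQuantile_strictMonoOn h1 h2 (half_mem hα₁) (half_mem hα₂)
        (by linarith))
lemma cpUpper_anti {n X : ℕ} (hXn : X ≤ n) {α₁ α₂ : ℝ} (hα₁ : α₁ ∈ Set.Ioo (0:ℝ) 1)
    (hα₂ : α₂ ∈ Set.Ioo (0:ℝ) 1) (h : α₁ ≤ α₂) : cpUpper n X α₂ ≤ cpUpper n X α₁ := by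
  unfold cpUpper
  split_ifs with hX
  · exact le_refl 1
  · obtain ⟨h1, h2⟩ := cpUpper_pos_params hX hXn
    rcases eq_or_lt_of_le h with rfl | hlt
    · exact le_refl _
    · exact le_of_lt (betaQuantile_strictMonoOn h1 h2 (one_sub_half_mem hα₂)
        (one_sub_half_mem hα₁) (by linarith))
lemma cpLower_n_strictMono {n : ℕ} (hn : 1 ≤ n) {α₁ α₂ : ℝ} (hα₁ : α₁ ∈ Set.Ioo (0:ℝ) 1)
    (hα₂ : α₂ ∈ Set.Ioo (0:ℝ) 1) (h : α₁ < α₂) : cpLower n n α₁ < cpLower n n α₂ := by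
  unfold cpLower
  rw [if_neg (by omega), if_neg (by omega)]
  obtain ⟨h1, h2⟩ := cpLower_pos_params (by omega : n ≠ 0) (le_refl n)
  exact betaQuantile_strictMonoOn h1 h2 (half_mem hα₁) (half_mem hα₂) (by linarith)
lemma betaCDF_upper_eq {n X : ℕ} (hX : X + 1 ≤ n) (p : ℝ) :
    betaCDF ((X:ℝ)+1) ((n:ℝ)-X) p = ∑ k ∈ Finset.Icc (X+1) n, binomPMF n k p := by
  have h := betaCDF_eq_binomTail (X := X+1) (n := n) (by omega) hX p
  push_cast at h
  rw [show ((n:ℝ)) - ((X:ℝ)+1) + 1 = (n:ℝ) - X from by ring] at h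
  exact h
lemma cpLower_le_cpUpper {n X : ℕ} (hXn : X ≤ n) {α : ℝ} (hα : α ∈ Set.Ioo (0:ℝ) 1) :
    cpLower n X α ≤ cpUpper n X α := by
  rcases eq_or_ne X 0 with rfl | hX0
  · rw [cpLower, if_pos rfl]
    exact (cpUpper_mem hXn hα).1
  rcases eq_or_ne X n with rfl | hXn'
  · rw [cpUpper, if_pos rfl]
    exact (cpLower_mem hXn hα).2
  rw [cpLower, if_neg hX0, cpUpper, if_neg hXn']
  obtain ⟨h1, h2⟩ := cpLower_pos_params hX0 hXn
  obtain ⟨h3, h4⟩ := cpUpper_pos_params hXn' hXn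
  set L := betaQuantile (X:ℝ) ((n:ℝ) - X + 1) (α / 2) with hL
  have hLmem : L ∈ Set.Ioo (0:ℝ) 1 := betaQuantile_mem h1 h2 (half_mem hα)
  -- L ≤ Q(1-α/2) ↔ via contrapositive: Q(1-α/2) < L → 1-α/2 < F'(L)
  by_contra hcon
  push_neg at hcon
  have := (betaQuantile_lt_iff h3 h4 (one_sub_half_mem hα) (Set.mem_Icc_of_Ioo hLmem)).mp hcon
  -- this : 1 - α/2 < betaCDF (X+1) (n-X) L
  rw [betaCDF_upper_eq (by omega : X + 1 ≤ n)] at this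
  have hFL : betaCDF (X:ℝ) ((n:ℝ) - X + 1) L = α / 2 :=
    betaCDF_betaQuantile h1 h2 (half_mem hα)
  rw [betaCDF_eq_binomTail (Nat.one_le_iff_ne_zero.mpr hX0) hXn] at hFL
  have hsub : ∑ k ∈ Finset.Icc (X+1) n, binomPMF n k L ≤ ∑ k ∈ Finset.Icc X n, binomPMF n k L := by
    apply Finset.sum_le_sum_of_subset_of_nonneg
    · intro k hk; rw [Finset.mem_Icc] at *; omega
    · intro k _ _; exact binomPMF_nonneg (Set.mem_Icc_of_Ioo hLmem)
  rw [hFL] at hsub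
  have := hα.2
  linarith
open Classical in
noncomputable def covFn (n : ℕ) (α p : ℝ) : ℝ :=
  ∑ X ∈ Finset.range (n + 1),
    (if cpLower n X α ≤ p ∧ p ≤ cpUpper n X α then binomPMF n X p else 0)
lemma covFn_ge {n : ℕ} (hn : 1 ≤ n) {α p : ℝ} (hα : α ∈ Set.Ioo (0:ℝ) 1)
    (hp : p ∈ Set.Ioo (0:ℝ) 1) : 1 - α ≤ covFn n α p := by
  classical
  have hpI : p ∈ Set.Icc (0:ℝ) 1 := Set.mem_Icc_of_Ioo hp
  set S := Finset.range (n+1) with hS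
  set cond : ℕ → Prop := fun X => cpLower n X α ≤ p ∧ p ≤ cpUpper n X α with hcond
  have hsplit := Finset.sum_filter_add_sum_filter_not S cond (fun X => binomPMF n X p)
  have htot : ∑ X ∈ S, binomPMF n X p = 1 := sum_binomPMF n p
  have hcov : covFn n α p = ∑ X ∈ S.filter cond, binomPMF n X p := by
    rw [Finset.sum_filter]
    rfl
  set badL := S.filter (fun X => p < cpLower n X α) with hbadLdef
  set badU := S.filter (fun X => cpUpper n X α < p) with hbadUdef
  have hXle : ∀ X ∈ S, X ≤ n := fun X hX => by
    rw [hS, Finset.mem_range] at hX; omega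
  have hbadL : ∑ X ∈ badL, binomPMF n X p ≤ α / 2 := by
    rcases badL.eq_empty_or_nonempty with he | hne
    · rw [he, Finset.sum_empty]; linarith [hα.1]
    · set X0 := badL.min' hne with hX0
      have hmem := badL.min'_mem hne
      obtain ⟨hX0S, hX0lt⟩ := Finset.mem_filter.mp hmem
      rw [← hX0] at hX0S hX0lt
      have hX0n : X0 ≤ n := hXle _ hX0S
      have hX00 : X0 ≠ 0 := by
        intro h0
        rw [h0] at hX0lt
        rw [cpLower, if_pos rfl] at hX0lt
        exact absurd hX0lt (not_lt.mpr hp.1.le)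
      obtain ⟨h1, h2⟩ := cpLower_pos_params hX00 hX0n
      rw [cpLower, if_neg hX00] at hX0lt
      have hkey := (lt_betaQuantile_iff h1 h2 (half_mem hα) hpI).mp hX0lt
      rw [betaCDF_eq_binomTail (Nat.one_le_iff_ne_zero.mpr hX00) hX0n] at hkey
      have hsub : ∑ X ∈ badL, binomPMF n X p ≤ ∑ k ∈ Finset.Icc X0 n, binomPMF n k p := by
        apply Finset.sum_le_sum_of_subset_of_nonneg
        · intro X hX
          rw [Finset.mem_Icc]
          exact ⟨badL.min'_le X hX, hXle X (Finset.mem_of_mem_filter X hX)⟩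
        · intro k _ _; exact binomPMF_nonneg hpI
      linarith
  have hbadU : ∑ X ∈ badU, binomPMF n X p ≤ α / 2 := by
    rcases badU.eq_empty_or_nonempty with he | hne
    · rw [he, Finset.sum_empty]; linarith [hα.1]
    · set X1 := badU.max' hne with hX1
      have hmem := badU.max'_mem hne
      obtain ⟨hX1S, hX1lt⟩ := Finset.mem_filter.mp hmem
      rw [← hX1] at hX1S hX1lt
      have hX1n : X1 ≤ n := hXle _ hX1S
      have hX1ne : X1 ≠ n := by
        intro h0
        rw [h0] at hX1lt
        rw [cpUpper, if_pos rfl] at hX1lt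
        exact absurd hX1lt (not_lt.mpr hp.2.le)
      obtain ⟨h1, h2⟩ := cpUpper_pos_params hX1ne hX1n
      rw [cpUpper, if_neg hX1ne] at hX1lt
      have hkey := (betaQuantile_lt_iff h1 h2 (one_sub_half_mem hα) hpI).mp hX1lt
      rw [betaCDF_upper_eq (by omega : X1 + 1 ≤ n)] at hkey
      have hconsec : ∑ k ∈ Finset.range (X1+1), binomPMF n k p
          + ∑ k ∈ Finset.Icc (X1+1) n, binomPMF n k p = 1 := by
        have h2 : Finset.Icc (X1+1) n = Finset.Ico (X1+1) (n+1) := by rw [Finset.Ico_add_one_right_eq_Icc]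
        rw [Finset.range_eq_Ico, h2,
          Finset.sum_Ico_consecutive (fun k => binomPMF n k p) (by omega) (by omega),
          ← Finset.range_eq_Ico]
        exact sum_binomPMF n p
      have hsub : ∑ X ∈ badU, binomPMF n X p ≤ ∑ k ∈ Finset.range (X1+1), binomPMF n k p := by
        apply Finset.sum_le_sum_of_subset_of_nonneg
        · intro X hX
          rw [Finset.mem_range]
          have := badU.le_max' X hX
          omega
        · intro k _ _; exact binomPMF_nonneg hpI
      linarith
  have hunion : ∑ X ∈ S.filter (fun X => ¬ cond X), binomPMF n X p
      ≤ ∑ X ∈ badL, binomPMF n X p + ∑ X ∈ badU, binomPMF n X p := by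
    have hsubset : S.filter (fun X => ¬ cond X) ⊆ badL ∪ badU := by
      intro X hX
      rw [Finset.mem_filter] at hX
      rw [Finset.mem_union, hbadLdef, hbadUdef, Finset.mem_filter, Finset.mem_filter]
      rcases not_and_or.mp hX.2 with h | h
      · exact Or.inl ⟨hX.1, not_le.mp h⟩
      · exact Or.inr ⟨hX.1, not_le.mp h⟩
    calc ∑ X ∈ S.filter (fun X => ¬ cond X), binomPMF n X p
        ≤ ∑ X ∈ badL ∪ badU, binomPMF n X p :=
          Finset.sum_le_sum_of_subset_of_nonneg hsubset
            (fun k _ _ => binomPMF_nonneg hpI)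
      _ ≤ ∑ X ∈ badL, binomPMF n X p + ∑ X ∈ badU, binomPMF n X p := by
          have h3 : ∑ X ∈ badL ∪ badU, binomPMF n X p
              = ∑ X ∈ badL, binomPMF n X p + ∑ X ∈ badU \ badL, binomPMF n X p := by
            rw [← Finset.sum_union Finset.disjoint_sdiff,
              Finset.union_sdiff_self_eq_union]
          have h4 : ∑ X ∈ badU \ badL, binomPMF n X p ≤ ∑ X ∈ badU, binomPMF n X p :=
            Finset.sum_le_sum_of_subset_of_nonneg Finset.sdiff_subset
              (fun k _ _ => binomPMF_nonneg hpI)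
          rw [h3]
          linarith
  rw [hcov]
  linarith
lemma betaPDF_nonneg {r s : ℝ} (hr : 0 < r) (hs : 0 < s) {t : ℝ} (ht : t ∈ Set.Icc (0:ℝ) 1) :
    0 ≤ betaPDF r s t :=
  div_nonneg (mul_nonneg (Real.rpow_nonneg ht.1 _)
    (Real.rpow_nonneg (by linarith [ht.2]) _)) (betaFun_pos hr hs).le
lemma betaPDF_measurable (r s : ℝ) : Measurable (betaPDF r s) := by
  unfold betaPDF
  fun_prop
lemma binomPMF_continuous (n X : ℕ) : Continuous (fun p => binomPMF n X p) := by
  unfold binomPMF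
  fun_prop
lemma binomPMF_le {n X : ℕ} {p : ℝ} (hp : p ∈ Set.Icc (0:ℝ) 1) :
    binomPMF n X p ≤ (n.choose X : ℝ) := by
  unfold binomPMF
  calc (n.choose X : ℝ) * p ^ X * (1 - p) ^ (n - X)
      ≤ (n.choose X : ℝ) * 1 * 1 := by
        apply mul_le_mul
        · apply mul_le_mul (le_refl _) (pow_le_one₀ hp.1 hp.2) (pow_nonneg hp.1 _) (by positivity)
        · exact pow_le_one₀ (by linarith [hp.2]) (by linarith [hp.1])
        · exact pow_nonneg (by linarith [hp.2]) _
        · positivity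
    _ = (n.choose X : ℝ) := by ring
lemma term_intervalIntegrable {r s : ℝ} (hr : 0 < r) (hs : 0 < s) (n X : ℕ) (L U : ℝ) :
    IntervalIntegrable
      (fun p => (if L ≤ p ∧ p ≤ U then binomPMF n X p else 0) * betaPDF r s p) volume 0 1 := by
  rw [intervalIntegrable_iff_integrableOn_Ioc_of_le zero_le_one]
  have hpdf : IntegrableOn (betaPDF r s) (Set.Ioc (0:ℝ) 1) volume := by
    rw [← intervalIntegrable_iff_integrableOn_Ioc_of_le zero_le_one]
    exact betaPDF_intervalIntegrable hr hs (by norm_num) (by norm_num)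
  apply Integrable.mono (hpdf.const_mul ((n.choose X : ℝ)))
  · apply Measurable.aestronglyMeasurable
    apply Measurable.mul _ (betaPDF_measurable r s)
    exact Measurable.ite (measurableSet_Icc (a := L) (b := U))
      (binomPMF_continuous n X).measurable measurable_const
  · filter_upwards [ae_restrict_mem measurableSet_Ioc] with p hp
    have hpI : p ∈ Set.Icc (0:ℝ) 1 := ⟨hp.1.le, hp.2⟩
    rw [Real.norm_eq_abs, Real.norm_eq_abs, abs_mul, abs_mul]
    apply mul_le_mul _ (le_refl _) (abs_nonneg _) (by positivity)
    rw [abs_of_nonneg (by positivity : (0:ℝ) ≤ (n.choose X : ℝ))]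
    split_ifs with h
    · rw [abs_of_nonneg (binomPMF_nonneg hpI)]
      exact binomPMF_le hpI
    · simp
lemma covFn_mul_pdf_eq (n : ℕ) (α : ℝ) (r s : ℝ) :
    (fun p => covFn n α p * betaPDF r s p) = fun p => ∑ X ∈ Finset.range (n+1),
      (if cpLower n X α ≤ p ∧ p ≤ cpUpper n X α then binomPMF n X p else 0) * betaPDF r s p := by
  funext p
  rw [covFn, Finset.sum_mul]
lemma covFn_mul_pdf_intervalIntegrable {r s : ℝ} (hr : 0 < r) (hs : 0 < s) (n : ℕ) (α : ℝ) :
    IntervalIntegrable (fun p => covFn n α p * betaPDF r s p) volume 0 1 := by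
  rw [covFn_mul_pdf_eq]
  have h := IntervalIntegrable.sum (μ := volume) (a := 0) (b := 1) (Finset.range (n+1))
    (f := fun X => fun p => (if cpLower n X α ≤ p ∧ p ≤ cpUpper n X α
      then binomPMF n X p else 0) * betaPDF r s p)
    (fun X _ => term_intervalIntegrable hr hs n X _ _)
  simpa [Finset.sum_fn] using h
lemma meanCoverage_eq (α : ℝ) (n : ℕ) (r s : ℝ) :
    meanCoverage α n r s = ∫ p in (0:ℝ)..1, covFn n α p * betaPDF r s p := rfl
lemma ae_ne_endpoints : ∀ᵐ p ∂(volume.restrict (Set.Icc (0:ℝ) 1)), p ≠ 0 ∧ p ≠ 1 := by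
  have h : ∀ᵐ p ∂(volume : Measure ℝ), p ∉ ({0, 1} : Set ℝ) :=
    ((Set.finite_singleton (1:ℝ)).insert 0).countable.ae_notMem volume
  apply ae_restrict_of_ae
  filter_upwards [h] with p hp
  simp only [Set.mem_insert_iff, Set.mem_singleton_iff, not_or] at hp
  exact hp
lemma meanCoverage_ge {n : ℕ} (hn : 1 ≤ n) {r s : ℝ} (hr : 0 < r) (hs : 0 < s) {α : ℝ}
    (hα : α ∈ Set.Ioo (0:ℝ) 1) : 1 - α ≤ meanCoverage α n r s := by
  rw [meanCoverage_eq]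
  have hconst : IntervalIntegrable (fun p => (1 - α) * betaPDF r s p) volume 0 1 :=
    (betaPDF_intervalIntegrable hr hs (by norm_num) (by norm_num)).const_mul _
  have hmono : (fun p => (1 - α) * betaPDF r s p)
      ≤ᵐ[volume.restrict (Set.Icc (0:ℝ) 1)] (fun p => covFn n α p * betaPDF r s p) := by
    filter_upwards [ae_ne_endpoints, ae_restrict_mem measurableSet_Icc] with p hne hpI
    have hpIoo : p ∈ Set.Ioo (0:ℝ) 1 :=
      ⟨lt_of_le_of_ne hpI.1 (Ne.symm hne.1), lt_of_le_of_ne hpI.2 hne.2⟩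
    exact mul_le_mul_of_nonneg_right (covFn_ge hn hα hpIoo) (betaPDF_nonneg hr hs hpI)
  have h1 := intervalIntegral.integral_mono_ae_restrict zero_le_one hconst
    (covFn_mul_pdf_intervalIntegrable hr hs n α) hmono
  rw [intervalIntegral.integral_const_mul] at h1
  have h2 : ∫ p in (0:ℝ)..1, betaPDF r s p = 1 := betaCDF_one hr hs
  rw [h2, mul_one] at h1
  exact h1
lemma contMul_pdf_intervalIntegrable {r s : ℝ} (hr : 0 < r) (hs : 0 < s) {g : ℝ → ℝ}
    (hg : Continuous g) {a b : ℝ} (hab : a ≤ b) (ha : a ∈ Set.Icc (0:ℝ) 1)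
    (hb : b ∈ Set.Icc (0:ℝ) 1) :
    IntervalIntegrable (fun p => g p * betaPDF r s p) volume a b := by
  obtain ⟨M, hM⟩ : ∃ M, ∀ x ∈ Set.Icc (0:ℝ) 1, ‖g x‖ ≤ M :=
    (isCompact_Icc).exists_bound_of_continuousOn hg.continuousOn
  rw [intervalIntegrable_iff_integrableOn_Ioc_of_le hab]
  have hpdf : IntegrableOn (betaPDF r s) (Set.Ioc a b) volume := by
    rw [← intervalIntegrable_iff_integrableOn_Ioc_of_le hab]
    exact betaPDF_intervalIntegrable hr hs ha hb
  apply Integrable.mono (hpdf.const_mul M)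
  · exact (hg.measurable.mul (betaPDF_measurable r s)).aestronglyMeasurable
  · filter_upwards [ae_restrict_mem measurableSet_Ioc] with p hp
    have hpI : p ∈ Set.Icc (0:ℝ) 1 := ⟨ha.1.trans hp.1.le, hp.2.trans hb.2⟩
    have hM0 : 0 ≤ M := (norm_nonneg _).trans (hM 0 (by norm_num))
    rw [Real.norm_eq_abs, Real.norm_eq_abs, abs_mul, abs_mul, abs_of_nonneg hM0]
    exact mul_le_mul (hM p hpI) le_rfl (abs_nonneg _) hM0
lemma intervalIntegrable_sub01 {c d : ℝ} (hc : c ∈ Set.Icc (0:ℝ) 1) (hd : d ∈ Set.Icc (0:ℝ) 1)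
    {f : ℝ → ℝ} (hf : IntervalIntegrable f volume 0 1) : IntervalIntegrable f volume c d := by
  apply hf.mono_set
  rw [Set.uIcc_of_le (zero_le_one)]
  exact Set.uIcc_subset_Icc hc hd
lemma covFn_anti {n : ℕ} {α₁ α₂ p : ℝ} (hα₁ : α₁ ∈ Set.Ioo (0:ℝ) 1)
    (hα₂ : α₂ ∈ Set.Ioo (0:ℝ) 1) (h12 : α₁ ≤ α₂) (hp : p ∈ Set.Icc (0:ℝ) 1) :
    covFn n α₂ p ≤ covFn n α₁ p := by
  unfold covFn
  apply Finset.sum_le_sum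
  intro X hX
  have hXn : X ≤ n := by rw [Finset.mem_range] at hX; omega
  by_cases hc : cpLower n X α₂ ≤ p ∧ p ≤ cpUpper n X α₂
  · rw [if_pos hc, if_pos ⟨(cpLower_mono hXn hα₁ hα₂ h12).trans hc.1,
      hc.2.trans (cpUpper_anti hXn hα₁ hα₂ h12)⟩]
  · rw [if_neg hc]
    split_ifs with h
    · exact binomPMF_nonneg hp
    · exact le_refl 0
lemma cpLower_n_mem {n : ℕ} (hn : 1 ≤ n) {α : ℝ} (hα : α ∈ Set.Ioo (0:ℝ) 1) :
    cpLower n n α ∈ Set.Ioo (0:ℝ) 1 := by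
  rw [cpLower, if_neg (by omega)]
  obtain ⟨h1, h2⟩ := cpLower_pos_params (by omega : n ≠ 0) le_rfl
  exact betaQuantile_mem h1 h2 (half_mem hα)
lemma binomPMF_self {n : ℕ} (p : ℝ) : binomPMF n n p = p ^ n := by
  unfold binomPMF
  simp [Nat.sub_self]
lemma meanCoverage_strictAnti {n : ℕ} (hn : 1 ≤ n) {r s : ℝ} (hr : 0 < r) (hs : 0 < s)
    {α₁ α₂ : ℝ} (hα₁ : α₁ ∈ Set.Ioo (0:ℝ) 1) (hα₂ : α₂ ∈ Set.Ioo (0:ℝ) 1) (h12 : α₁ < α₂) :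
    meanCoverage α₂ n r s < meanCoverage α₁ n r s := by
  have hna : cpLower n n α₁ ∈ Set.Ioo (0:ℝ) 1 := cpLower_n_mem hn hα₁
  have hnb : cpLower n n α₂ ∈ Set.Ioo (0:ℝ) 1 := cpLower_n_mem hn hα₂
  set a := cpLower n n α₁ with hadef
  set b := cpLower n n α₂ with hbdef
  have hab : a < b := cpLower_n_strictMono hn hα₁ hα₂ h12
  have haI : a ∈ Set.Icc (0:ℝ) 1 := Set.mem_Icc_of_Ioo hna
  have hbI : b ∈ Set.Icc (0:ℝ) 1 := Set.mem_Icc_of_Ioo hnb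
  have hI1 : IntervalIntegrable (fun p => covFn n α₁ p * betaPDF r s p) volume 0 1 :=
    covFn_mul_pdf_intervalIntegrable hr hs n α₁
  have hI2 : IntervalIntegrable (fun p => covFn n α₂ p * betaPDF r s p) volume 0 1 :=
    covFn_mul_pdf_intervalIntegrable hr hs n α₂
  have hIg : IntervalIntegrable (fun p => binomPMF n n p * betaPDF r s p) volume a b :=
    contMul_pdf_intervalIntegrable hr hs (binomPMF_continuous n n) hab.le haI hbI
  -- splitting
  have hsplit1 : (∫ p in (0:ℝ)..1, covFn n α₁ p * betaPDF r s p)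
      = (∫ p in (0:ℝ)..a, covFn n α₁ p * betaPDF r s p)
      + (∫ p in a..b, covFn n α₁ p * betaPDF r s p)
      + (∫ p in b..(1:ℝ), covFn n α₁ p * betaPDF r s p) := by
    rw [intervalIntegral.integral_add_adjacent_intervals
      (intervalIntegrable_sub01 (by norm_num) haI hI1) (intervalIntegrable_sub01 haI hbI hI1),
      intervalIntegral.integral_add_adjacent_intervals
      (intervalIntegrable_sub01 (by norm_num) hbI hI1) (intervalIntegrable_sub01 hbI (by norm_num) hI1)]
  have hsplit2 : (∫ p in (0:ℝ)..1, covFn n α₂ p * betaPDF r s p)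
      = (∫ p in (0:ℝ)..a, covFn n α₂ p * betaPDF r s p)
      + (∫ p in a..b, covFn n α₂ p * betaPDF r s p)
      + (∫ p in b..(1:ℝ), covFn n α₂ p * betaPDF r s p) := by
    rw [intervalIntegral.integral_add_adjacent_intervals
      (intervalIntegrable_sub01 (by norm_num) haI hI2) (intervalIntegrable_sub01 haI hbI hI2),
      intervalIntegral.integral_add_adjacent_intervals
      (intervalIntegrable_sub01 (by norm_num) hbI hI2) (intervalIntegrable_sub01 hbI (by norm_num) hI2)]
  -- outer comparisons
  have hptwise : ∀ p ∈ Set.Icc (0:ℝ) 1,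
      covFn n α₂ p * betaPDF r s p ≤ covFn n α₁ p * betaPDF r s p := fun p hp =>
    mul_le_mul_of_nonneg_right (covFn_anti hα₁ hα₂ h12.le hp) (betaPDF_nonneg hr hs hp)
  have key1 : (∫ p in (0:ℝ)..a, covFn n α₂ p * betaPDF r s p)
      ≤ ∫ p in (0:ℝ)..a, covFn n α₁ p * betaPDF r s p := by
    apply intervalIntegral.integral_mono_on haI.1
      (intervalIntegrable_sub01 (by norm_num) haI hI2)
      (intervalIntegrable_sub01 (by norm_num) haI hI1)
    intro p hp
    exact hptwise p ⟨hp.1, hp.2.trans haI.2⟩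
  have key3 : (∫ p in b..(1:ℝ), covFn n α₂ p * betaPDF r s p)
      ≤ ∫ p in b..(1:ℝ), covFn n α₁ p * betaPDF r s p := by
    apply intervalIntegral.integral_mono_on hbI.2
      (intervalIntegrable_sub01 hbI (by norm_num) hI2)
      (intervalIntegrable_sub01 hbI (by norm_num) hI1)
    intro p hp
    exact hptwise p ⟨hbI.1.trans hp.1, hp.2⟩
  -- gap on [a, b)
  have hgap : ∀ p ∈ Set.Icc a b, p ≠ b →
      covFn n α₂ p + binomPMF n n p ≤ covFn n α₁ p := by
    intro p hp hpb
    have hpI : p ∈ Set.Icc (0:ℝ) 1 := ⟨haI.1.trans hp.1, hp.2.trans hbI.2⟩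
    have hplt : p < b := lt_of_le_of_ne hp.2 hpb
    have hrw : covFn n α₂ p + binomPMF n n p
        = ∑ X ∈ Finset.range (n+1),
          ((if cpLower n X α₂ ≤ p ∧ p ≤ cpUpper n X α₂ then binomPMF n X p else 0)
            + (if X = n then binomPMF n n p else 0)) := by
      rw [Finset.sum_add_distrib, Finset.sum_ite_eq' (Finset.range (n+1)) n
        (fun _ => binomPMF n n p), if_pos (Finset.self_mem_range_succ n)]
      rfl
    rw [hrw, covFn]
    apply Finset.sum_le_sum
    intro X hX
    have hXn : X ≤ n := by rw [Finset.mem_range] at hX; omega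
    rcases eq_or_ne X n with heq | hXne
    · subst heq
      have hnc2 : ¬(cpLower X X α₂ ≤ p ∧ p ≤ cpUpper X X α₂) :=
        fun hcc => absurd hcc.1 (not_le.mpr hplt)
      have hc1 : cpLower X X α₁ ≤ p ∧ p ≤ cpUpper X X α₁ :=
        ⟨hp.1, by rw [cpUpper, if_pos rfl]; exact hpI.2⟩
      rw [if_neg hnc2, if_pos rfl, if_pos hc1, zero_add]
    · rw [if_neg hXne, add_zero]
      by_cases hc : cpLower n X α₂ ≤ p ∧ p ≤ cpUpper n X α₂
      · rw [if_pos hc, if_pos ⟨(cpLower_mono hXn hα₁ hα₂ h12.le).trans hc.1,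
          hc.2.trans (cpUpper_anti hXn hα₁ hα₂ h12.le)⟩]
      · rw [if_neg hc]
        split_ifs with h
        · exact binomPMF_nonneg hpI
        · exact le_refl 0
  have key2 : (∫ p in a..b, covFn n α₂ p * betaPDF r s p)
      + (∫ p in a..b, binomPMF n n p * betaPDF r s p)
      ≤ ∫ p in a..b, covFn n α₁ p * betaPDF r s p := by
    rw [← intervalIntegral.integral_add (intervalIntegrable_sub01 haI hbI hI2) hIg]
    apply intervalIntegral.integral_mono_ae_restrict hab.le
      ((intervalIntegrable_sub01 haI hbI hI2).add hIg)
      (intervalIntegrable_sub01 haI hbI hI1)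
    have hb_ae : ∀ᵐ p ∂(volume.restrict (Set.Icc a b)), p ≠ b := by
      apply ae_restrict_of_ae
      filter_upwards [(Set.countable_singleton b).ae_notMem volume] with p hp
      simpa using hp
    filter_upwards [hb_ae, ae_restrict_mem measurableSet_Icc] with p hpb hp
    have hpI : p ∈ Set.Icc (0:ℝ) 1 := ⟨haI.1.trans hp.1, hp.2.trans hbI.2⟩
    have := hgap p hp hpb
    have hpdf := betaPDF_nonneg hr hs hpI
    nlinarith [mul_le_mul_of_nonneg_right this hpdf]
  have keypos : 0 < ∫ p in a..b, binomPMF n n p * betaPDF r s p := by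
    apply intervalIntegral.intervalIntegral_pos_of_pos_on hIg _ hab
    intro x hx
    have hxI : x ∈ Set.Ioo (0:ℝ) 1 := ⟨hna.1.trans hx.1, hx.2.trans hnb.2⟩
    apply mul_pos _ (betaPDF_pos hr hs hxI)
    rw [binomPMF_self]
    exact pow_pos hxI.1 n
  rw [meanCoverage_eq, meanCoverage_eq, hsplit1, hsplit2]
  linarith
lemma term_integral_eq {r s : ℝ} (hr : 0 < r) (hs : 0 < s) {n X : ℕ} {L U : ℝ}
    (hL : L ∈ Set.Icc (0:ℝ) 1) (hU : U ∈ Set.Icc (0:ℝ) 1) (hLU : L ≤ U) :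
    (∫ p in (0:ℝ)..1, (if L ≤ p ∧ p ≤ U then binomPMF n X p else 0) * betaPDF r s p)
      = (∫ p in (0:ℝ)..U, binomPMF n X p * betaPDF r s p)
        - (∫ p in (0:ℝ)..L, binomPMF n X p * betaPDF r s p) := by
  classical
  set f : ℝ → ℝ := fun p => (if L ≤ p ∧ p ≤ U then binomPMF n X p else 0) * betaPDF r s p
    with hf
  have hfint : IntervalIntegrable f volume 0 1 := term_intervalIntegrable hr hs n X L U
  have e1 : (∫ p in (0:ℝ)..L, f p) = 0 := by
    have h0 : (∫ p in (0:ℝ)..L, f p) = ∫ p in (0:ℝ)..L, (0:ℝ) := by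
      apply intervalIntegral.integral_congr_ae
      have hne : ∀ᵐ p ∂(volume : Measure ℝ), p ≠ L := by
        filter_upwards [(Set.countable_singleton L).ae_notMem volume] with p hp
        simpa using hp
      filter_upwards [hne] with p hpL hpmem
      rw [Set.uIoc_of_le hL.1] at hpmem
      rw [hf]
      simp only
      rw [if_neg, zero_mul]
      intro hcc
      exact hpL (le_antisymm hpmem.2 hcc.1)
    simpa using h0
  have e3 : (∫ p in U..(1:ℝ), f p) = 0 := by
    have h0 : (∫ p in U..(1:ℝ), f p) = ∫ p in U..(1:ℝ), (0:ℝ) := by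
      apply intervalIntegral.integral_congr_ae
      filter_upwards with p hpmem
      rw [Set.uIoc_of_le hU.2] at hpmem
      rw [hf]
      simp only
      rw [if_neg, zero_mul]
      intro hcc
      exact absurd hcc.2 (not_le.mpr hpmem.1)
    simpa using h0
  have e2 : (∫ p in L..U, f p) = ∫ p in L..U, binomPMF n X p * betaPDF r s p := by
    apply intervalIntegral.integral_congr_ae
    filter_upwards with p hpmem
    rw [Set.uIoc_of_le hLU] at hpmem
    rw [hf]
    simp only
    rw [if_pos ⟨hpmem.1.le, hpmem.2⟩]
  have hsplit : (∫ p in (0:ℝ)..1, f p)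
      = (∫ p in (0:ℝ)..L, f p) + (∫ p in L..U, f p) + (∫ p in U..(1:ℝ), f p) := by
    rw [intervalIntegral.integral_add_adjacent_intervals
      (intervalIntegrable_sub01 (by norm_num) hL hfint)
      (intervalIntegrable_sub01 hL hU hfint),
      intervalIntegral.integral_add_adjacent_intervals
      (intervalIntegrable_sub01 (by norm_num) hU hfint)
      (intervalIntegrable_sub01 hU (by norm_num) hfint)]
  have hGsplit : (∫ p in L..U, binomPMF n X p * betaPDF r s p)
      = (∫ p in (0:ℝ)..U, binomPMF n X p * betaPDF r s p)
        - (∫ p in (0:ℝ)..L, binomPMF n X p * betaPDF r s p) := by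
    rw [← intervalIntegral.integral_add_adjacent_intervals
      (contMul_pdf_intervalIntegrable hr hs (binomPMF_continuous n X) hL.1 (by norm_num) hL)
      (contMul_pdf_intervalIntegrable hr hs (binomPMF_continuous n X) hLU hL hU)]
    ring
  rw [hsplit, e1, e2, e3, hGsplit]
  ring
lemma cpLower_continuousOn {n X : ℕ} (hXn : X ≤ n) :
    ContinuousOn (fun α => cpLower n X α) (Set.Ioo (0:ℝ) 1) := by
  unfold cpLower
  split_ifs with h
  · exact continuousOn_const
  · obtain ⟨h1, h2⟩ := cpLower_pos_params h hXn
    exact (betaQuantile_continuousOn h1 h2).comp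
      ((continuous_id.div_const 2).continuousOn) (fun α hα => half_mem hα)
lemma cpUpper_continuousOn {n X : ℕ} (hXn : X ≤ n) :
    ContinuousOn (fun α => cpUpper n X α) (Set.Ioo (0:ℝ) 1) := by
  unfold cpUpper
  split_ifs with h
  · exact continuousOn_const
  · obtain ⟨h1, h2⟩ := cpUpper_pos_params h hXn
    exact (betaQuantile_continuousOn h1 h2).comp
      ((continuous_const.sub (continuous_id.div_const 2)).continuousOn)
      (fun α hα => one_sub_half_mem hα)
lemma meanCoverage_continuousOn {n : ℕ} (hn : 1 ≤ n) {r s : ℝ} (hr : 0 < r) (hs : 0 < s) :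
    ContinuousOn (fun α => meanCoverage α n r s) (Set.Ioo (0:ℝ) 1) := by
  have hG : ∀ X : ℕ, ContinuousOn
      (fun x => ∫ p in (0:ℝ)..x, binomPMF n X p * betaPDF r s p) (Set.Icc (0:ℝ) 1) := by
    intro X
    have h := intervalIntegral.continuousOn_primitive_interval'
      (contMul_pdf_intervalIntegrable hr hs (binomPMF_continuous n X) zero_le_one
        (by norm_num) (by norm_num)) (a := 0) (by simp)
    simpa [Set.uIcc_of_le (zero_le_one (α := ℝ))] using h
  have hcont : ContinuousOn (fun α => ∑ X ∈ Finset.range (n+1),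
      ((∫ p in (0:ℝ)..(cpUpper n X α), binomPMF n X p * betaPDF r s p)
        - (∫ p in (0:ℝ)..(cpLower n X α), binomPMF n X p * betaPDF r s p)))
      (Set.Ioo (0:ℝ) 1) := by
    apply continuousOn_finset_sum
    intro X hX
    have hXn : X ≤ n := by rw [Finset.mem_range] at hX; omega
    exact ((hG X).comp (cpUpper_continuousOn hXn) (fun α hα => cpUpper_mem hXn hα)).sub
      ((hG X).comp (cpLower_continuousOn hXn) (fun α hα => cpLower_mem hXn hα))
  apply ContinuousOn.congr hcont
  intro α hα
  show meanCoverage α n r s = _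
  simp only
  rw [meanCoverage_eq, covFn_mul_pdf_eq,
    intervalIntegral.integral_finset_sum (fun X _ => term_intervalIntegrable hr hs n X _ _)]
  apply Finset.sum_congr rfl
  intro X hX
  have hXn : X ≤ n := by rw [Finset.mem_range] at hX; omega
  exact term_integral_eq hr hs (cpLower_mem hXn hα) (cpUpper_mem hXn hα)
    (cpLower_le_cpUpper hXn hα)

/-- Existence and uniqueness of the adjusted level `α'`: if `C(α_U,n,r,s) ≤ 1 - α` for some
`α_U ∈ (α,1)`, then there is a unique `α' ∈ [α, α_U]` with `C(α',n,r,s) = 1 - α`. -/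
theorem adjusted_level_existsUnique (n : ℕ) (hn : 1 ≤ n) (r s : ℝ) (hr : 0 < r) (hs : 0 < s)
    (α : ℝ) (hα : α ∈ Set.Ioo (0:ℝ) 1) (αU : ℝ) (hαU : αU ∈ Set.Ioo α 1)
    (hC : meanCoverage αU n r s ≤ 1 - α) :
    ∃! α' : ℝ, α' ∈ Set.Icc α αU ∧ meanCoverage α' n r s = 1 - α := by
  have hsub : Set.Icc α αU ⊆ Set.Ioo (0:ℝ) 1 := fun x hx =>
    ⟨lt_of_lt_of_le hα.1 hx.1, lt_of_le_of_lt hx.2 hαU.2⟩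
  have hcont : ContinuousOn (fun a => meanCoverage a n r s) (Set.Icc α αU) :=
    (meanCoverage_continuousOn hn hr hs).mono hsub
  have hge : 1 - α ≤ meanCoverage α n r s := meanCoverage_ge hn hr hs hα
  have hIVT := intermediate_value_Icc' (le_of_lt hαU.1) hcont
  obtain ⟨x, hx, hxval⟩ := hIVT ⟨hC, hge⟩
  replace hxval : meanCoverage x n r s = 1 - α := hxval
  refine ⟨x, ⟨hx, hxval⟩, ?_⟩
  rintro y ⟨hy, hyval⟩
  by_contra hne
  rcases lt_or_gt_of_ne hne with h | h
  · have := meanCoverage_strictAnti hn hr hs (hsub hy) (hsub hx) h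
    rw [hxval, hyval] at this
    exact lt_irrefl _ this
  · have := meanCoverage_strictAnti hn hr hs (hsub hx) (hsub hy) h
    rw [hxval, hyval] at this
    exact lt_irrefl _ this
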